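/- (The multiplicative cost with the exponential operator valued cost equals the risk-sensitive cost.) Let Γ be a controlled transfer operator with p(y|u,ω) ≠ 0 for every u ∈ U, y ∈ Y and every normalized state ω. Let L be a cost function, N a positive semidefinite Hermitian matrix, μ > 0, and set R(u)ω̂ = (tr(exp(μ L(u)) ω̂)/tr ω̂) · ω̂ (matrix exponential; R(u)0 = 0) and F = exp(μ N). Then for every normalized state ω₀ and every feedback controller K, the multiplicative cost J^μ_{ω₀,0}(K) equals ∑ over (y_1,…,y_M) ∈ Y^M of (∏_{k=0}^{M−1} p(y_{k+1}|u_k, ω_k)) · (∏_{k=0}^{M−1} tr(exp(μ L(u_k)) ω_k)) · tr(exp(μ N) ω_M), where ω_0 = ω₀, u_k = K_k(y_1,…,y_k), and ω_{k+1} = Λ_Γ(u_k, y_{k+1}) ω_k; that is, J^μ_{ω₀,0}(K) = E^K_{ω₀,0}[∏_{k=0}^{M−1} ⟨ω_k, e^{μL(u_k)}⟩ · ⟨ω_M, e^{μN}⟩], the risk-sensitive cost functional. -/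

import Mathlib

open Matrix BigOperators
open scoped ComplexOrder

noncomputable section

/-- Complex `n × n` matrices. -/
abbrev Mat (n : ℕ) := Matrix (Fin n) (Fin n) ℂ

/-- Real part of the trace. -/
def trR {n : ℕ} (A : Mat n) : ℝ := A.trace.re

/-- The matrix exponential. -/
def expM {n : ℕ} (A : Mat n) : Mat n := NormedSpace.exp A

/-- The probability `p(y|u,ω) = tr(Γ(u,y)ω)`. -/
def pDist {n : ℕ} {U Y : Type*} (Γ : U → Y → Mat n →ₗ[ℂ] Mat n)
    (u : U) (y : Y) (ω : Mat n) : ℝ := trR (Γ u y ω)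

/-- The normalized conditional state `Λ_Γ(u,y)ω = Γ(u,y)ω / p(y|u,ω)` (equal to `0`
when `p(y|u,ω) = 0`). -/
def lamState {n : ℕ} {U Y : Type*} (Γ : U → Y → Mat n →ₗ[ℂ] Mat n)
    (u : U) (y : Y) (ω : Mat n) : Mat n := (pDist Γ u y ω)⁻¹ • Γ u y ω

/-- The exponential operator valued cost
`R(u)ωh = (tr(exp(μ L(u)) ωh)/tr ωh) • ωh` (with `R(u)0 = 0` by the division
convention). -/
def Rexp {n : ℕ} {U : Type*} (μ : ℝ) (L : U → Mat n) (u : U) (ωh : Mat n) : Mat n :=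
  (trR (expM (μ • L u) * ωh) / trR ωh) • ωh

/-- The cost functional `G` of the multiplicative problem, with controls chosen by the
controller `K` from the accumulated record. -/
def Gcost {n : ℕ} {U Y : Type*} (Γ : U → Y → Mat n →ₗ[ℂ] Mat n)
    (R : U → Mat n → Mat n) (F : Mat n) (K : List Y → U) :
    List Y → Mat n → List Y → ℝ
  | _, ωh, [] => trR (F * ωh)
  | rec, ωh, y :: ys =>
      Gcost Γ R F K (rec ++ [y]) (Γ (K rec) y (R (K rec) ωh)) ys

/-- The risk-sensitive running quantity
`(∏_k p(y_{k+1}|u_k,ω_k) · tr(exp(μ L(u_k)) ω_k)) · tr(exp(μ N) ω_M)` along the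
record, where `ω` follows the normalized conditional dynamics. -/
def rsCostProd {n : ℕ} {U Y : Type*} (Γ : U → Y → Mat n →ₗ[ℂ] Mat n)
    (μ : ℝ) (L : U → Mat n) (N : Mat n) (K : List Y → U) :
    Mat n → List Y → List Y → ℝ
  | ω, _, [] => trR (expM (μ • N) * ω)
  | ω, rec, y :: ys =>
      pDist Γ (K rec) y ω * trR (expM (μ • L (K rec)) * ω)
        * rsCostProd Γ μ L N K (lamState Γ (K rec) y ω) (rec ++ [y]) ys

section Aux

variable {n : ℕ} {U Y : Type*}

lemma trR_smul (c : ℝ) (A : Mat n) : trR (c • A) = c * trR A := by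
  simp [trR, Matrix.trace_smul, Complex.smul_re]

lemma trR_mul_smul (F : Mat n) (c : ℝ) (A : Mat n) :
    trR (F * (c • A)) = c * trR (F * A) := by
  rw [mul_smul_comm, trR_smul]

lemma psd_diag_nonneg {A : Mat n} (hA : A.PosSemidef) (i : Fin n) : 0 ≤ A i i := by
  have h := hA.dotProduct_mulVec_nonneg (Pi.single i 1)
  simpa [Matrix.mulVec, dotProduct, Pi.single_apply,
    Finset.sum_ite_eq, Finset.sum_ite_eq'] using h

lemma psd_trace_nonneg {A : Mat n} (hA : A.PosSemidef) : 0 ≤ A.trace :=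
  Finset.sum_nonneg fun i _ => psd_diag_nonneg hA i

lemma psd_trace_eq_trR {A : Mat n} (hA : A.PosSemidef) : A.trace = (trR A : ℂ) := by
  have h := psd_trace_nonneg hA
  rw [Complex.le_def] at h
  exact Complex.ext rfl h.2.symm

lemma psd_trR_nonneg {A : Mat n} (hA : A.PosSemidef) : 0 ≤ trR A := by
  have h := psd_trace_nonneg hA
  rw [Complex.le_def] at h
  simpa [trR] using h.1

lemma psd_real_smul {A : Mat n} (hA : A.PosSemidef) {c : ℝ} (hc : 0 ≤ c) :
    (c • A).PosSemidef := by
  refine Matrix.PosSemidef.of_dotProduct_mulVec_nonneg ?_ fun x => ?_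
  · unfold Matrix.IsHermitian
    rw [Matrix.conjTranspose_smul, star_trivial, hA.1.eq]
  · have := hA.dotProduct_mulVec_nonneg x
    rw [Matrix.smul_mulVec, dotProduct_smul, Complex.real_smul]
    exact mul_nonneg (by exact_mod_cast hc) this

/-- `lamState` is a normalized state when `p ≠ 0`. -/
lemma lamState_psd (Γ : U → Y → Mat n →ₗ[ℂ] Mat n) {u : U} {y : Y} {ω : Mat n}
    (hΓ : (Γ u y ω).PosSemidef) : (lamState Γ u y ω).PosSemidef := by
  unfold lamState
  exact psd_real_smul hΓ (inv_nonneg.2 (psd_trR_nonneg hΓ))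

lemma lamState_trace (Γ : U → Y → Mat n →ₗ[ℂ] Mat n) {u : U} {y : Y} {ω : Mat n}
    (hΓ : (Γ u y ω).PosSemidef) (hne : pDist Γ u y ω ≠ 0) :
    (lamState Γ u y ω).trace = 1 := by
  unfold lamState
  rw [Matrix.trace_smul, psd_trace_eq_trR hΓ]
  have : trR (Γ u y ω) = pDist Γ u y ω := rfl
  rw [this, Complex.real_smul]
  push_cast
  field_simp

lemma Gcost_zero (Γ : U → Y → Mat n →ₗ[ℂ] Mat n) (μ : ℝ) (L : U → Mat n) (F : Mat n)
    (K : List Y → U) : ∀ (ys rec : List Y), Gcost Γ (Rexp μ L) F K rec 0 ys = 0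
  | [], _ => by simp [Gcost, trR]
  | y :: ys, rec => by
      simp only [Gcost, Rexp, smul_zero, map_zero]
      exact Gcost_zero Γ μ L F K ys _

/-- Key induction: the multiplicative cost on a scaled normalized state factors as the
scale times the risk-sensitive running product. -/
lemma Gcost_eq_rsCostProd (Γ : U → Y → Mat n →ₗ[ℂ] Mat n)
    (hPSD : ∀ (u : U) (y : Y) (ω : Mat n), ω.PosSemidef → (Γ u y ω).PosSemidef)
    (hp : ∀ (u : U) (y : Y) (ω : Mat n), ω.PosSemidef → ω.trace = 1 →
      pDist Γ u y ω ≠ 0)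
    (μ : ℝ) (L : U → Mat n) (N : Mat n) (K : List Y → U) :
    ∀ (ys rec : List Y) (ω : Mat n), ω.PosSemidef → ω.trace = 1 → ∀ (c : ℝ),
      Gcost Γ (Rexp μ L) (expM (μ • N)) K rec (c • ω) ys
        = c * rsCostProd Γ μ L N K ω rec ys
  | [], rec, ω, hω, hωtr, c => by
      simp only [Gcost, rsCostProd, trR_mul_smul]
  | y :: ys, rec, ω, hω, hωtr, c => by
      rcases eq_or_ne c 0 with rfl | hc
      · simp only [zero_smul, zero_mul]
        exact Gcost_zero Γ μ L _ K _ _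
      · set u := K rec with hu
        have hΓω : (Γ u y ω).PosSemidef := hPSD u y ω hω
        have hpne : pDist Γ u y ω ≠ 0 := hp u y ω hω hωtr
        have htrRω : trR ω = 1 := by
          have := psd_trace_eq_trR hω
          rw [hωtr] at this
          exact_mod_cast this.symm
        have hR : Rexp μ L u (c • ω)
            = (c * trR (expM (μ • L u) * ω)) • ω := by
          unfold Rexp
          rw [trR_mul_smul, trR_smul, htrRω, mul_one, smul_smul]
          field_simp
        have hΓlin : ∀ (d : ℝ) (A : Mat n), Γ u y (d • A) = d • Γ u y A :=
          fun d A => (Γ u y).map_smul_of_tower d A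
        have hΓdecomp : Γ u y ω = pDist Γ u y ω • lamState Γ u y ω := by
          unfold lamState
          rw [smul_smul, mul_inv_cancel₀ hpne, one_smul]
        simp only [Gcost, rsCostProd, hR, hΓlin, ← hu]
        rw [hΓdecomp, smul_smul,
          Gcost_eq_rsCostProd Γ hPSD hp μ L N K ys (rec ++ [y]) _
            (lamState_psd Γ hΓω) (lamState_trace Γ hΓω hpne)]
        ring

end Aux

/-- with the exponential operator valued cost `R` and `F = exp(μN)`, the
multiplicative cost `J^μ_{ω₀,0}(K)` equals the risk-sensitive cost functional
`E[∏_k ⟨ω_k, e^{μL(u_k)}⟩ · ⟨ω_M, e^{μN}⟩]`. -/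
theorem multiplicative_cost_eq_risk_sensitive_cost
    {n : ℕ} {U Y : Type*} [Fintype U] [Nonempty U] [Fintype Y] [Nonempty Y]
    (Γ : U → Y → Mat n →ₗ[ℂ] Mat n)
    (hPSD : ∀ (u : U) (y : Y) (ω : Mat n), ω.PosSemidef → (Γ u y ω).PosSemidef)
    (hNorm : ∀ (u : U) (ω : Mat n), ∑ y : Y, (Γ u y ω).trace = ω.trace)
    (hp : ∀ (u : U) (y : Y) (ω : Mat n), ω.PosSemidef → ω.trace = 1 →
      pDist Γ u y ω ≠ 0)
    (L : U → Mat n) (hL : ∀ u, (L u).PosSemidef)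
    (N : Mat n) (hN : N.PosSemidef)
    (μ : ℝ) (hμ : 0 < μ)
    (M : ℕ) (hM : 1 ≤ M)
    (ω₀ : Mat n) (hω₀ : ω₀.PosSemidef) (hω₀tr : ω₀.trace = 1)
    (K : List Y → U) :
    ∑ ys : Fin M → Y, Gcost Γ (Rexp μ L) (expM (μ • N)) K [] ω₀ (List.ofFn ys)
      = ∑ ys : Fin M → Y, rsCostProd Γ μ L N K ω₀ [] (List.ofFn ys) := by
  refine Finset.sum_congr rfl fun ys _ => ?_
  have := Gcost_eq_rsCostProd Γ hPSD hp μ L N K (List.ofFn ys) [] ω₀ hω₀ hω₀tr 1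
  simpa using this
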